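/- Let Δ₁, Δ₂ be real numbers (or integers) with Δ₂ ≥ 2 and Δ₁ ≥ 2Δ₂ + 3, and let L₅ be the symmetric 4×4 matrix with rows (Δ₁, -1, -1, -1), (-1, Δ₂, -1, -1), (-1, -1, Δ₂-1, 0), (-1, -1, 0, Δ₂-1). Then the second largest eigenvalue of L₅ is at least Δ₂ + 1. -/

import Mathlib

open Finset Polynomial

/-- The `k`-th largest element (1-indexed) of a multiset of reals, with default `0`. -/
noncomputable def kthLargestR (s : Multiset ℝ) (k : ℕ) : ℝ :=
  (s.sort (· ≤ ·)).reverse.getD (k - 1) 0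

/-- The second largest eigenvalue (i.e. second largest root, with multiplicity, of the
characteristic polynomial) of a square real matrix. -/
noncomputable def secondLargestEig {k : ℕ} (M : Matrix (Fin k) (Fin k) ℝ) : ℝ :=
  kthLargestR M.charpoly.roots 2

lemma kth2 (s : Multiset ℝ) (t a b : ℝ) (ha : a ∈ s) (hb : b ∈ s) (hab : a ≠ b)
    (hta : t ≤ a) (htb : t ≤ b) : t ≤ kthLargestR s 2 := by
  unfold kthLargestR
  set l := s.sort (· ≤ ·) with hl
  have hsort : l.Pairwise (· ≤ ·) := s.pairwise_sort _
  have hal : a ∈ l := (Multiset.mem_sort _).2 ha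
  have hbl : b ∈ l := (Multiset.mem_sort _).2 hb
  have hn : 2 ≤ l.length := by
    rcases List.getElem_of_mem hal with ⟨ia, hia, hiae⟩
    rcases List.getElem_of_mem hbl with ⟨ib, hib, hibe⟩
    have : ia ≠ ib := by
      rintro rfl
      exact hab (hiae ▸ hibe ▸ rfl)
    omega
  have h1 : (2 - 1 : ℕ) < l.reverse.length := by simpa using by omega
  rw [List.getD_eq_getElem _ _ h1, List.getElem_reverse]
  set m := l.length - 1 - (2 - 1) with hm
  by_contra hcon
  push_neg at hcon
  rcases List.getElem_of_mem hal with ⟨ia, hia, hiae⟩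
  rcases List.getElem_of_mem hbl with ⟨ib, hib, hibe⟩
  have key : ∀ i (hi : i < l.length), t ≤ l[i] → i = l.length - 1 := by
    intro i hi hti
    by_contra hne
    have him : i ≤ m := by omega
    have : l[i] ≤ l[m] := by
      rcases eq_or_lt_of_le him with h | h
      · simp [h]
      · exact hsort.rel_get_of_lt (a := ⟨i, hi⟩) (b := ⟨m, by omega⟩) h
    linarith
  have ea := key ia hia (hiae ▸ hta)
  have eb := key ib hib (hibe ▸ htb)
  apply hab
  rw [← hiae, ← hibe]
  congr 1
  omega

lemma eval_cp (Δ₁ Δ₂ x : ℝ) :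
    (Matrix.charpoly !![Δ₁, -1, -1, -1;
                        -1, Δ₂, -1, -1;
                        -1, -1, Δ₂ - 1, 0;
                        -1, -1, 0, Δ₂ - 1]).eval x =
      3 - 3*Δ₂^2 + 2*Δ₁ - Δ₁*Δ₂ - 2*Δ₁*Δ₂^2 + Δ₁*Δ₂^3
      + (-2 + 7*Δ₂ + 2*Δ₂^2 - Δ₂^3 + Δ₁ + 4*Δ₁*Δ₂ - 3*Δ₁*Δ₂^2) * x
      + (-4 - 4*Δ₂ + 3*Δ₂^2 - 2*Δ₁ + 3*Δ₁*Δ₂) * x^2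
      + (2 - 3*Δ₂ - Δ₁) * x^3 + x^4 := by
  rw [Matrix.charpoly, show (Polynomial.eval x : ℝ[X] → ℝ) = evalRingHom x from rfl,
    RingHom.map_det, RingHom.mapMatrix_apply]
  have : ((Matrix.charmatrix !![Δ₁, -1, -1, -1; -1, Δ₂, -1, -1;
      -1, -1, Δ₂ - 1, 0; -1, -1, 0, Δ₂ - 1]).map (evalRingHom x)) =
      !![x - Δ₁, 1, 1, 1; 1, x - Δ₂, 1, 1;
         1, 1, x - (Δ₂ - 1), 0; 1, 1, 0, x - (Δ₂ - 1)] := by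
    ext i j
    fin_cases i <;> fin_cases j <;>
      simp [Matrix.charmatrix_apply, Matrix.one_apply, Matrix.vecHead, Matrix.vecTail]
  rw [this]
  simp [Matrix.det_succ_row_zero, Fin.sum_univ_succ, Matrix.vecHead, Matrix.vecTail,
    Fin.succAbove, Fin.castSucc, Fin.castAdd, Fin.castLE]
  ring

/-- For reals `Δ₂ ≥ 2` and `Δ₁ ≥ 2Δ₂ + 3`, the second largest eigenvalue
of the matrix `L₅` is at least `Δ₂ + 1`. -/
theorem stmt16 (Δ₁ Δ₂ : ℝ) (h₂ : 2 ≤ Δ₂) (h₁ : 2 * Δ₂ + 3 ≤ Δ₁) :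
    secondLargestEig !![Δ₁, -1, -1, -1;
                        -1, Δ₂, -1, -1;
                        -1, -1, Δ₂ - 1, 0;
                        -1, -1, 0, Δ₂ - 1] ≥ Δ₂ + 1 := by
  set M : Matrix (Fin 4) (Fin 4) ℝ :=
    !![Δ₁, -1, -1, -1; -1, Δ₂, -1, -1; -1, -1, Δ₂ - 1, 0; -1, -1, 0, Δ₂ - 1] with hM
  set p := M.charpoly with hp
  have hmonic : p.Monic := M.charpoly_monic
  have hne : p ≠ 0 := hmonic.ne_zero
  have heval := eval_cp Δ₁ Δ₂
  -- Δ₂ + 1 is a root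
  have hroot1 : (Δ₂ + 1) ∈ p.roots := by
    rw [Polynomial.mem_roots hne]
    show p.eval (Δ₂ + 1) = 0
    rw [heval]; ring
  -- p (Δ₂ + 2) < 0
  have hu : p.eval (Δ₂ + 2) < 0 := by
    rw [heval]; nlinarith [sq_nonneg Δ₂]
  -- a root > Δ₂ + 2
  have hdeg : 0 < p.degree := by
    rw [Polynomial.degree_eq_natDegree hne]
    have : p.natDegree = 4 := by
      rw [hp, Matrix.charpoly_natDegree_eq_dim, Fintype.card_fin]
    rw [this]; norm_num
  have ht := Polynomial.tendsto_atTop_of_leadingCoeff_nonneg p hdeg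
    (by rw [hmonic.leadingCoeff]; norm_num)
  obtain ⟨v, hv0, hv2⟩ :=
    ((ht.eventually_ge_atTop 0).and (Filter.eventually_ge_atTop (Δ₂ + 2))).exists
  have hmem : (0 : ℝ) ∈ Set.Icc (p.eval (Δ₂ + 2)) (p.eval v) := ⟨le_of_lt hu, hv0⟩
  obtain ⟨c, hcI, hcz⟩ := intermediate_value_Icc hv2 p.continuous.continuousOn hmem
  have hroot2 : c ∈ p.roots := by
    rw [Polynomial.mem_roots hne]; exact hcz
  have hc2 : Δ₂ + 2 ≤ c := hcI.1
  show Δ₂ + 1 ≤ kthLargestR p.roots 2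
  exact kth2 _ _ _ _ hroot1 hroot2 (by linarith) le_rfl (by linarith)
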